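/- Let D be a positive integer, let I be a proper subset of {1,...,D} with complement Ī, and let s, t : ℝ^{|I|} → ℝ^{|Ī|} be differentiable functions. Let f : ℝ^D → ℝ^D be the coupling layer f(v)_i = v_i for i ∈ I and f(v)_i = v_i · exp(s(v_I)_i) + t(v_I)_i for i ∈ Ī. Then f is differentiable at every v ∈ ℝ^D, and the determinant of its derivative (Jacobian) at v equals exp(∑_{i ∈ Ī} s(v_I)_i). In particular this determinant is strictly positive at every point. -/

import Mathlib

/-- A real NVP coupling layer on `ℝ^D` with passive index set `I` (whose complement `Ī` is
the active set) and scale and translation functions `s, t : ℝ^{|I|} → ℝ^{|Ī|}`: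
`f(v)_i = v_i` for `i ∈ I`, and `f(v)_i = v_i · exp(s(v_I)_i) + t(v_I)_i` for `i ∉ I`. -/
noncomputable def couplingLayer {D : ℕ} (I : Finset (Fin D))
    (s t : ({i : Fin D // i ∈ I} → ℝ) → ({i : Fin D // i ∉ I} → ℝ)) :
    (Fin D → ℝ) → (Fin D → ℝ) := fun v i =>
  if h : i ∈ I then v i
  else v i * Real.exp (s (fun j => v j.1) ⟨i, h⟩) + t (fun j => v j.1) ⟨i, h⟩

/-- The continuous linear projection onto the passive coordinates. -/
noncomputable def cplPI {D : ℕ} (I : Finset (Fin D)) :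
    (Fin D → ℝ) →L[ℝ] ({i : Fin D // i ∈ I} → ℝ) :=
  ContinuousLinearMap.pi fun k => ContinuousLinearMap.proj k.1

lemma cplPI_apply {D : ℕ} (I : Finset (Fin D)) (v : Fin D → ℝ) :
    cplPI I v = fun j => v j.1 := rfl

lemma cplPI_single {D : ℕ} (I : Finset (Fin D)) {j : Fin D} (hj : j ∉ I) :
    cplPI I (Pi.single j 1) = 0 := by
  funext k
  have : k.1 ≠ j := fun h => hj (h ▸ k.2)
  simp [cplPI_apply, Pi.single_apply, this]

lemma cpl_coord_active {D : ℕ} (I : Finset (Fin D))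
    (s t : ({i : Fin D // i ∈ I} → ℝ) → ({i : Fin D // i ∉ I} → ℝ))
    (hs : Differentiable ℝ s) (ht : Differentiable ℝ t) (v : Fin D → ℝ)
    {i : Fin D} (h : i ∉ I) :
    DifferentiableAt ℝ (fun w => couplingLayer I s t w i) v ∧
    ∀ j : Fin D, j ∉ I →
      fderiv ℝ (fun w => couplingLayer I s t w i) v (Pi.single j 1)
        = if i = j then Real.exp (s (cplPI I v) ⟨i, h⟩) else 0 := by
  have hP : HasFDerivAt (cplPI I) (cplPI I) v := (cplPI I).hasFDerivAt
  have hsP : HasFDerivAt (fun w => s (cplPI I w) ⟨i, h⟩)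
      ((ContinuousLinearMap.proj (⟨i, h⟩ : {i : Fin D // i ∉ I}) :
          ({i : Fin D // i ∉ I} → ℝ) →L[ℝ] ℝ).comp
        ((fderiv ℝ s (cplPI I v)).comp (cplPI I))) v :=
    (ContinuousLinearMap.proj (⟨i, h⟩ : {i : Fin D // i ∉ I}) :
        ({i : Fin D // i ∉ I} → ℝ) →L[ℝ] ℝ).hasFDerivAt.comp v
      (((hs (cplPI I v)).hasFDerivAt).comp v hP)
  have hexp := hsP.exp
  have heval : HasFDerivAt (fun w : Fin D → ℝ => w i)
      (ContinuousLinearMap.proj i : (Fin D → ℝ) →L[ℝ] ℝ) v :=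
    (ContinuousLinearMap.proj i : (Fin D → ℝ) →L[ℝ] ℝ).hasFDerivAt
  have htP : HasFDerivAt (fun w => t (cplPI I w) ⟨i, h⟩)
      ((ContinuousLinearMap.proj (⟨i, h⟩ : {i : Fin D // i ∉ I}) :
          ({i : Fin D // i ∉ I} → ℝ) →L[ℝ] ℝ).comp
        ((fderiv ℝ t (cplPI I v)).comp (cplPI I))) v :=
    (ContinuousLinearMap.proj (⟨i, h⟩ : {i : Fin D // i ∉ I}) :
        ({i : Fin D // i ∉ I} → ℝ) →L[ℝ] ℝ).hasFDerivAt.comp v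
      (((ht (cplPI I v)).hasFDerivAt).comp v hP)
  have hmul := (heval.mul hexp).add htP
  have hfun : (fun w => couplingLayer I s t w i)
      = fun w => w i * Real.exp (s (cplPI I w) ⟨i, h⟩) + t (cplPI I w) ⟨i, h⟩ := by
    funext w
    simp [couplingLayer, h, cplPI_apply]
  rw [hfun]
  refine ⟨hmul.differentiableAt, fun j hj => ?_⟩
  have hmf : fderiv ℝ (fun w => w i * Real.exp (s (cplPI I w) ⟨i, h⟩) + t (cplPI I w) ⟨i, h⟩) v = _ :=
    hmul.fderiv
  rw [hmf]
  have h0 : cplPI I (Pi.single j 1) = 0 := cplPI_single I hj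
  simp [h0, Pi.single_apply, eq_comm]

/-- If the scale and translation networks `s` and `t` are differentiable, then the coupling
layer `f` is differentiable at every `v ∈ ℝ^D`, and the determinant of its Fréchet
derivative (the Jacobian determinant) at `v` equals `exp(∑_{i ∈ Ī} s(v_I)_i)`; in
particular this determinant is strictly positive at every point. -/
theorem coupling_layer_jacobian_det {D : ℕ} (hD : 0 < D)
    (I : Finset (Fin D)) (hI : I ⊂ Finset.univ)
    (s t : ({i : Fin D // i ∈ I} → ℝ) → ({i : Fin D // i ∉ I} → ℝ))
    (hs : Differentiable ℝ s) (ht : Differentiable ℝ t) (v : Fin D → ℝ) :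
    DifferentiableAt ℝ (couplingLayer I s t) v ∧
    (fderiv ℝ (couplingLayer I s t) v).det
      = Real.exp (∑ i : {i : Fin D // i ∉ I}, s (fun j => v j.1) i) ∧
    0 < (fderiv ℝ (couplingLayer I s t) v).det := by
  classical
  -- coordinate differentiability and derivatives
  have hpassive : ∀ i : Fin D, i ∈ I →
      HasFDerivAt (fun w => couplingLayer I s t w i)
        (ContinuousLinearMap.proj i : (Fin D → ℝ) →L[ℝ] ℝ) v := by
    intro i hi
    have hfun : (fun w => couplingLayer I s t w i) = fun w : Fin D → ℝ => w i := by
      funext w; simp [couplingLayer, hi]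
    rw [hfun]
    exact (ContinuousLinearMap.proj i : (Fin D → ℝ) →L[ℝ] ℝ).hasFDerivAt
  have hdiff : ∀ i : Fin D, DifferentiableAt ℝ (fun w => couplingLayer I s t w i) v := by
    intro i
    by_cases hi : i ∈ I
    · exact (hpassive i hi).differentiableAt
    · exact (cpl_coord_active I s t hs ht v hi).1
  have hdf : DifferentiableAt ℝ (couplingLayer I s t) v := differentiableAt_pi.mpr hdiff
  have hfd : fderiv ℝ (couplingLayer I s t) v
      = ContinuousLinearMap.pi fun i => fderiv ℝ (fun w => couplingLayer I s t w i) v :=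
    fderiv_pi hdiff
  -- matrix entries
  have hentry : ∀ i j : Fin D,
      fderiv ℝ (couplingLayer I s t) v (fun j' => if j' = j then 1 else 0) i
        = fderiv ℝ (fun w => couplingLayer I s t w i) v (Pi.single j 1) := by
    intro i j
    have : (fun j' : Fin D => if j' = j then (1:ℝ) else 0) = Pi.single j 1 := by
      funext k; simp [Pi.single_apply]
    rw [this, hfd]
    rfl
  set M : Matrix (Fin D) (Fin D) ℝ :=
    LinearMap.toMatrix' ((fderiv ℝ (couplingLayer I s t) v) :
      (Fin D → ℝ) →ₗ[ℝ] (Fin D → ℝ)) with hM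
  have hMentry : ∀ i j : Fin D,
      M i j = fderiv ℝ (fun w => couplingLayer I s t w i) v (Pi.single j 1) := by
    intro i j
    rw [hM, LinearMap.toMatrix'_apply]
    have := hentry i j
    rwa [show (fun j' : Fin D => if j' = j then (1:ℝ) else 0) = Pi.single j 1 from by
      funext k; simp [Pi.single_apply]] at this
  -- entries for passive rows
  have hrow_passive : ∀ i j : Fin D, i ∈ I →
      M i j = if i = j then 1 else 0 := by
    intro i j hi
    rw [hMentry, (hpassive i hi).fderiv]
    simp [Pi.single_apply, eq_comm]
  -- entries for active rows, active columns
  have hrow_active : ∀ (i j : Fin D) (hi : i ∉ I), j ∉ I →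
      M i j = if i = j then Real.exp (s (cplPI I v) ⟨i, hi⟩) else 0 := by
    intro i j hi hj
    rw [hMentry]
    exact (cpl_coord_active I s t hs ht v hi).2 j hj
  -- determinant via block decomposition
  have hdet0 : (fderiv ℝ (couplingLayer I s t) v).det = M.det := by
    rw [hM, LinearMap.det_toMatrix']
  set e : {i : Fin D // i ∈ I} ⊕ {i : Fin D // i ∉ I} ≃ Fin D :=
    Equiv.sumCompl (· ∈ I) with he
  have hsub : M.submatrix e e
      = Matrix.fromBlocks 1 0
          (Matrix.of fun (i : {i : Fin D // i ∉ I}) (j : {i : Fin D // i ∈ I}) => M i.1 j.1)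
          (Matrix.diagonal fun i : {i : Fin D // i ∉ I} =>
            Real.exp (s (cplPI I v) i)) := by
    ext x y
    cases x with
    | inl i =>
      cases y with
      | inl j =>
        simp only [Matrix.submatrix_apply, Matrix.fromBlocks_apply₁₁, Matrix.one_apply]
        rw [he]
        simp only [Equiv.sumCompl_apply_inl]
        rw [hrow_passive i.1 j.1 i.2]
        simp only [Subtype.ext_iff]
      | inr j =>
        simp only [Matrix.submatrix_apply, Matrix.fromBlocks_apply₁₂, Matrix.zero_apply]
        rw [he]
        simp only [Equiv.sumCompl_apply_inl, Equiv.sumCompl_apply_inr]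
        rw [hrow_passive i.1 j.1 i.2]
        have : i.1 ≠ j.1 := fun hh => j.2 (hh ▸ i.2)
        simp [this]
    | inr i =>
      cases y with
      | inl j =>
        simp only [Matrix.submatrix_apply, Matrix.fromBlocks_apply₂₁, Matrix.of_apply]
        rw [he]
        simp
      | inr j =>
        simp only [Matrix.submatrix_apply, Matrix.fromBlocks_apply₂₂, Matrix.diagonal_apply]
        rw [he]
        simp only [Equiv.sumCompl_apply_inr]
        rw [hrow_active i.1 j.1 i.2 j.2]
        by_cases hij : i = j
        · subst hij; simp
        · have : i.1 ≠ j.1 := fun hh => hij (Subtype.ext hh)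
          simp [hij, this]
  have hdet : M.det = Real.exp (∑ i : {i : Fin D // i ∉ I}, s (fun j => v j.1) i) := by
    rw [← Matrix.det_submatrix_equiv_self e M, hsub,
      Matrix.det_fromBlocks_zero₁₂, Matrix.det_one, one_mul, Matrix.det_diagonal,
      ← Real.exp_sum]
    rfl
  refine ⟨hdf, ?_, ?_⟩
  · rw [hdet0, hdet]
  · rw [hdet0, hdet]; exact Real.exp_pos _
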